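/- Let M ≥ 2, x₁ < ⋯ < x_M distinct reals, and E : ℝ × ℝ → ℝ≥0 with E(·, y) continuous, strictly convex, and coercive for each y. Then J(α, β) := Σₘ E(α + βxₘ, yₘ) is coercive on ℝ² (J(α,β) → ∞ as ‖(α,β)‖ → ∞), and hence the linear regression problem min_{(α,β)} J(α,β) admits a unique minimizer. -/

import Mathlib

open Filter

/-- The affine evaluation homeomorphism `(α, β) ↦ (α + β a, α + β b)` for `a ≠ b`. -/
noncomputable def statHomeo (a b : ℝ) (hab : a ≠ b) : ℝ × ℝ ≃ₜ ℝ × ℝ where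
  toFun p := (p.1 + p.2 * a, p.1 + p.2 * b)
  invFun q := (q.1 - a * ((q.2 - q.1) / (b - a)), (q.2 - q.1) / (b - a))
  left_inv p := by
    have h : b - a ≠ 0 := sub_ne_zero.mpr (Ne.symm hab)
    have : (p.1 + p.2 * b - (p.1 + p.2 * a)) / (b - a) = p.2 := by
      field_simp; ring
    simp only [this]
    ext <;> simp <;> ring
  right_inv q := by
    have h : b - a ≠ 0 := sub_ne_zero.mpr (Ne.symm hab)
    ext <;> simp <;> field_simp <;> ring
  continuous_toFun := by continuity
  continuous_invFun := by continuity

theorem stmt15 (M : ℕ) (hM : 2 ≤ M) (x y : Fin M → ℝ) (hx : StrictMono x)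
    (E : ℝ → ℝ → ℝ) (hE0 : ∀ s t : ℝ, 0 ≤ E s t)
    (hEcont : ∀ t : ℝ, Continuous (fun s : ℝ => E s t))
    (hEconv : ∀ t : ℝ, StrictConvexOn ℝ Set.univ (fun s : ℝ => E s t))
    (hEcoer : ∀ t : ℝ, Filter.Tendsto (fun s : ℝ => E s t)
      (Filter.cocompact ℝ) Filter.atTop) :
    Filter.Tendsto (fun p : ℝ × ℝ => ∑ m, E (p.1 + p.2 * x m) (y m))
      (Filter.cocompact (ℝ × ℝ)) Filter.atTop ∧
    ∃! p : ℝ × ℝ, ∀ q : ℝ × ℝ,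
      ∑ m, E (p.1 + p.2 * x m) (y m) ≤ ∑ m, E (q.1 + q.2 * x m) (y m) := by
  set J : ℝ × ℝ → ℝ := fun p => ∑ m, E (p.1 + p.2 * x m) (y m) with hJ
  set i0 : Fin M := ⟨0, by omega⟩
  set i1 : Fin M := ⟨1, by omega⟩
  have hi01 : i0 < i1 := by simp [i0, i1, Fin.lt_def]
  have hxne : x i0 ≠ x i1 := ne_of_lt (hx hi01)
  -- If the affine values agree at i0 and i1 then the parameters agree.
  have key : ∀ p q : ℝ × ℝ, p.1 + p.2 * x i0 = q.1 + q.2 * x i0 →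
      p.1 + p.2 * x i1 = q.1 + q.2 * x i1 → p = q := by
    intro p q h0 h1
    have hb : p.2 = q.2 := by
      have := sub_eq_zero.mpr h1
      have h2 : (p.2 - q.2) * (x i1 - x i0) = 0 := by linarith
      rcases mul_eq_zero.mp h2 with h | h
      · linarith
      · exact absurd (sub_eq_zero.mp h) (Ne.symm hxne)
    have ha : p.1 = q.1 := by
      have := h0; rw [hb] at this; linarith
    exact Prod.ext ha hb
  -- Coercivity
  have hcoer : Tendsto J (cocompact (ℝ × ℝ)) atTop := by
    set e := statHomeo (x i0) (x i1) hxne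
    have hg : Tendsto (fun q : ℝ × ℝ => E q.1 (y i0) + E q.2 (y i1))
        (cocompact (ℝ × ℝ)) atTop := by
      rw [← Filter.coprod_cocompact, Filter.coprod, tendsto_sup]
      constructor
      · exact Filter.Tendsto.atTop_add_nonneg ((hEcoer (y i0)).comp tendsto_comap)
          (fun q => hE0 _ _)
      · exact Filter.Tendsto.nonneg_add_atTop (fun q => hE0 _ _)
          ((hEcoer (y i1)).comp tendsto_comap)
    have hL : Tendsto e (cocompact (ℝ × ℝ)) (cocompact (ℝ × ℝ)) := e.map_cocompact.le
    have hcomp := hg.comp hL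
    apply tendsto_atTop_mono _ hcomp
    intro p
    have hsub : ({i0, i1} : Finset (Fin M)) ⊆ Finset.univ := Finset.subset_univ _
    have hpair : ∑ m ∈ ({i0, i1} : Finset (Fin M)), E (p.1 + p.2 * x m) (y m)
        = E (p.1 + p.2 * x i0) (y i0) + E (p.1 + p.2 * x i1) (y i1) :=
      Finset.sum_pair (ne_of_lt hi01)
    have := Finset.sum_le_sum_of_subset_of_nonneg hsub
      (fun m _ _ => hE0 (p.1 + p.2 * x m) (y m))
    calc E (e p).1 (y i0) + E (e p).2 (y i1)
        = ∑ m ∈ ({i0, i1} : Finset (Fin M)), E (p.1 + p.2 * x m) (y m) := by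
          rw [hpair]; rfl
      _ ≤ J p := this
  refine ⟨hcoer, ?_⟩
  -- Existence of a minimizer
  have hJcont : Continuous J := by
    apply continuous_finset_sum
    intro m _
    exact (hEcont (y m)).comp (continuous_fst.add (continuous_snd.mul continuous_const))
  obtain ⟨p, hp⟩ := hJcont.exists_forall_le hcoer
  refine ⟨p, hp, ?_⟩
  -- Uniqueness
  intro q hq
  by_contra hne
  have hJpq : J q = J p := le_antisymm (hq p) (hp q)
  set r : ℝ × ℝ := ((q.1 + p.1) / 2, (q.2 + p.2) / 2)
  -- some index where affine values differ
  have hex : ∃ m : Fin M, q.1 + q.2 * x m ≠ p.1 + p.2 * x m := by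
    by_contra h
    push_neg at h
    exact hne (key q p (h i0) (h i1))
  obtain ⟨m₀, hm₀⟩ := hex
  have hr : ∀ m : Fin M, r.1 + r.2 * x m
      = (1/2 : ℝ) • (q.1 + q.2 * x m) + (1/2 : ℝ) • (p.1 + p.2 * x m) := by
    intro m; simp [r, smul_eq_mul]; ring
  have hle : ∀ m : Fin M, E (r.1 + r.2 * x m) (y m)
      ≤ (1/2 : ℝ) * E (q.1 + q.2 * x m) (y m) + (1/2 : ℝ) * E (p.1 + p.2 * x m) (y m) := by
    intro m
    rw [hr m]
    have := (hEconv (y m)).convexOn.2 (Set.mem_univ (q.1 + q.2 * x m))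
      (Set.mem_univ (p.1 + p.2 * x m)) (by norm_num : (0:ℝ) ≤ 1/2)
      (by norm_num : (0:ℝ) ≤ 1/2) (by norm_num)
    simpa [smul_eq_mul] using this
  have hlt : E (r.1 + r.2 * x m₀) (y m₀)
      < (1/2 : ℝ) * E (q.1 + q.2 * x m₀) (y m₀) + (1/2 : ℝ) * E (p.1 + p.2 * x m₀) (y m₀) := by
    rw [hr m₀]
    have := (hEconv (y m₀)).2 (Set.mem_univ (q.1 + q.2 * x m₀))
      (Set.mem_univ (p.1 + p.2 * x m₀)) hm₀
      (by norm_num : (0:ℝ) < 1/2) (by norm_num : (0:ℝ) < 1/2) (by norm_num)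
    simpa [smul_eq_mul] using this
  have hsum : J r < ∑ m, ((1/2 : ℝ) * E (q.1 + q.2 * x m) (y m)
      + (1/2 : ℝ) * E (p.1 + p.2 * x m) (y m)) :=
    Finset.sum_lt_sum (fun m _ => hle m) ⟨m₀, Finset.mem_univ m₀, hlt⟩
  have : J r < J p := by
    have h2 : ∑ m, ((1/2 : ℝ) * E (q.1 + q.2 * x m) (y m)
        + (1/2 : ℝ) * E (p.1 + p.2 * x m) (y m)) = (1/2) * J q + (1/2) * J p := by
      rw [Finset.sum_add_distrib, ← Finset.mul_sum, ← Finset.mul_sum]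
    rw [h2, hJpq] at hsum
    linarith
  exact absurd (hp r) (not_le.mpr this)
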